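/- Among all optimal policies of a POMDP M, any optimal policy π* with minimal policy memory length satisfies l_mem(π*) ≤ l_value(π*). -/

import Mathlib

open Finset

/-- A function of a full history (a list of past (observation, action) pairs, most recent
last) *depends only on the last `k` steps of history* if it agrees on any two histories
of the same length that share their last `k` (observation, action) pairs. -/
def CtxDep {O A : Type*} {β : Type*} (k : ℕ) (f : List (O × A) → β) : Prop :=
  ∀ h₁ h₂ : List (O × A), h₁.length = h₂.length →
    h₁.drop (h₁.length - k) = h₂.drop (h₂.length - k) → f h₁ = f h₂

/-- The memory length of a history-dependent function: the least `k` such that it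
depends only on the last `k` steps of history. -/
noncomputable def memLen {O A : Type*} {β : Type*} (f : List (O × A) → β) : ℕ :=
  sInf {k | CtxDep k f}

/-- A (stochastic, history-dependent) policy: a probability weight on each action. -/
def IsPolicy {O A : Type*} [Fintype A] (π : List (O × A) → O → A → ℝ) : Prop :=
  (∀ h o a, 0 ≤ π h o a) ∧ ∀ h o, ∑ a, π h o a = 1

/-- A (history-dependent) transition kernel: probability weights on next observations. -/
def IsKernel {O A : Type*} [Fintype O] (P : List (O × A) → O → A → O → ℝ) : Prop :=
  (∀ h o a o', 0 ≤ P h o a o') ∧ ∀ h o a, ∑ o', P h o a o' = 1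

/-- `nstep reward trans π γ n h o a` : the expected discounted sum of the next `n`
rewards after taking action `a` at the history `(h, o)` and thereafter following `π`. -/
noncomputable def nstep {O A : Type*} [Fintype O] [Fintype A]
    (reward : List (O × A) → O → A → ℝ)
    (trans : List (O × A) → O → A → O → ℝ)
    (π : List (O × A) → O → A → ℝ) (γ : ℝ) :
    ℕ → List (O × A) → O → A → ℝ
  | 0, _, _, _ => 0
  | n + 1, h, o, a =>
      reward h o a + γ * ∑ o' : O, trans h o a o' *
        ∑ a' : A, π (h ++ [(o, a)]) o' a' * nstep reward trans π γ n (h ++ [(o, a)]) o' a'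

/-- Full-history Q-value in the finite-horizon (`T`) POMDP: at history `(h, o)`
(i.e. at time `t = h.length + 1`) there are `T - h.length` remaining rewards. -/
noncomputable def Qfull {O A : Type*} [Fintype O] [Fintype A] (T : ℕ)
    (reward : List (O × A) → O → A → ℝ)
    (trans : List (O × A) → O → A → O → ℝ)
    (π : List (O × A) → O → A → ℝ) (γ : ℝ)
    (h : List (O × A)) (o : O) (a : A) : ℝ :=
  nstep reward trans π γ (T - h.length) h o a

/-- Full-history state value of a policy. -/
noncomputable def Vfull {O A : Type*} [Fintype O] [Fintype A] (T : ℕ)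
    (reward : List (O × A) → O → A → ℝ)
    (trans : List (O × A) → O → A → O → ℝ) (γ : ℝ)
    (π : List (O × A) → O → A → ℝ)
    (h : List (O × A)) (o : O) : ℝ :=
  ∑ a, π h o a * Qfull T reward trans π γ h o a

/-- An optimal policy: a policy whose value dominates that of every policy at every history. -/
def OptimalPolicy {O A : Type*} [Fintype O] [Fintype A] (T : ℕ)
    (reward : List (O × A) → O → A → ℝ)
    (trans : List (O × A) → O → A → O → ℝ) (γ : ℝ)
    (π : List (O × A) → O → A → ℝ) : Prop :=
  IsPolicy π ∧ ∀ π', IsPolicy π' → ∀ h o,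
    Vfull T reward trans γ π' h o ≤ Vfull T reward trans γ π h o


section AuxGreedy

variable {O A : Type*} [Fintype O] [Fintype A]

/-- A canonical argmax of a function on a finite nonempty type. -/
noncomputable def argmaxF [Nonempty A] (q : A → ℝ) : A :=
  (Finset.exists_max_image (Finset.univ : Finset A) q Finset.univ_nonempty).choose

lemma argmaxF_spec [Nonempty A] (q : A → ℝ) (a : A) : q a ≤ q (argmaxF q) := by
  have h := (Finset.exists_max_image (Finset.univ : Finset A) q Finset.univ_nonempty).choose_spec
  exact h.2 a (Finset.mem_univ a)

open Classical in
noncomputable def greedy [Nonempty A] (Q : List (O × A) → O → A → ℝ) :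
    List (O × A) → O → A → ℝ :=
  fun h o a => if a = argmaxF (Q h o) then 1 else 0

lemma greedy_policy [Nonempty A] (Q : List (O × A) → O → A → ℝ) :
    IsPolicy (greedy Q) := by
  constructor
  · intro h o a
    unfold greedy
    split <;> norm_num
  · intro h o
    rw [Finset.sum_eq_single (argmaxF (Q h o))]
    · simp [greedy]
    · intro b _ hb; simp [greedy, hb]
    · intro hnot; exact absurd (Finset.mem_univ _) hnot

lemma sum_greedy_mul [Nonempty A] (Q : List (O × A) → O → A → ℝ)
    (h : List (O × A)) (o : O) (f : A → ℝ) :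
    ∑ a, greedy Q h o a * f a = f (argmaxF (Q h o)) := by
  rw [Finset.sum_eq_single (argmaxF (Q h o))]
  · simp [greedy]
  · intro b _ hb; simp [greedy, hb]
  · intro hnot; exact absurd (Finset.mem_univ _) hnot

lemma sum_weight_le [Nonempty A] (w q : A → ℝ) (hw : ∀ a, 0 ≤ w a)
    (hs : ∑ a, w a = 1) (c : A) (hc : ∀ a, q a ≤ q c) :
    ∑ a, w a * q a ≤ q c := by
  calc ∑ a, w a * q a ≤ ∑ a, w a * q c :=
        Finset.sum_le_sum fun a _ => mul_le_mul_of_nonneg_left (hc a) (hw a)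
    _ = q c := by rw [← Finset.sum_mul, hs, one_mul]

/-- Policy improvement: the greedy policy wrt the Q-function of `πs` does at least
as well as `πs` on every remaining horizon. -/
lemma nstep_le_greedy [Nonempty A] (T : ℕ) (γ : ℝ)
    (reward : List (O × A) → O → A → ℝ)
    (trans : List (O × A) → O → A → O → ℝ)
    (πs : List (O × A) → O → A → ℝ)
    (hγ0 : 0 ≤ γ) (htrans : IsKernel trans) (hπ : IsPolicy πs) :
    ∀ n, ∀ h : List (O × A), T - h.length = n → ∀ o a,
      nstep reward trans πs γ n h o a ≤
        nstep reward trans (greedy (fun h => fun o a => Qfull T reward trans πs γ h o a)) γ n h o a := by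
  intro n
  induction n with
  | zero => intro h _ o a; simp [nstep]
  | succ n ih =>
    intro h hT o a
    simp only [nstep]
    apply add_le_add_right
    apply mul_le_mul_of_nonneg_left _ hγ0
    apply Finset.sum_le_sum
    intro o' _
    apply mul_le_mul_of_nonneg_left _ (htrans.1 h o a o')
    have hlen : T - (h ++ [(o, a)]).length = n := by
      simp only [List.length_append, List.length_cons, List.length_nil]
      omega
    rw [sum_greedy_mul]
    set c := argmaxF ((fun h => fun o a => Qfull T reward trans πs γ h o a) (h ++ [(o, a)]) o') with hc
    have heq : ∀ x, nstep reward trans πs γ n (h ++ [(o, a)]) o' x =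
        Qfull T reward trans πs γ (h ++ [(o, a)]) o' x := by
      intro x; rw [Qfull, hlen]
    have step1 : ∑ a', πs (h ++ [(o, a)]) o' a' * nstep reward trans πs γ n (h ++ [(o, a)]) o' a' ≤
        nstep reward trans πs γ n (h ++ [(o, a)]) o' c := by
      apply sum_weight_le _ _ (hπ.1 _ o') (hπ.2 _ o')
      intro a'
      rw [heq, heq]
      exact argmaxF_spec (fun x => Qfull T reward trans πs γ (h ++ [(o, a)]) o' x) a'
    exact step1.trans (ih (h ++ [(o, a)]) hlen o' c)

end AuxGreedy

/-- among all optimal policies of a POMDP, any optimal policy `π⋆` with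
minimal policy memory length satisfies `l_mem(π⋆) ≤ l_value(π⋆)`. -/
theorem policy_memory_le_value_memory
    {O A : Type*} [Fintype O] [Fintype A] (T : ℕ) (γ : ℝ)
    (reward : List (O × A) → O → A → ℝ)
    (trans : List (O × A) → O → A → O → ℝ)
    (πs : List (O × A) → O → A → ℝ)
    (hγ0 : 0 ≤ γ) (hγ1 : γ ≤ 1) (htrans : IsKernel trans)
    (hopt : OptimalPolicy T reward trans γ πs)
    (hmin : ∀ π', OptimalPolicy T reward trans γ π' → memLen πs ≤ memLen π') :
    memLen πs ≤ memLen (fun h => fun o a => Qfull T reward trans πs γ h o a) := by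
  classical
  rcases isEmpty_or_nonempty A with hA | hA
  · have h0 : CtxDep 0 πs := by
      intro h₁ h₂ _ _
      have hnil : ∀ l : List (O × A), l = [] := by
        intro l
        cases l with
        | nil => rfl
        | cons x t => exact (hA.false x.2).elim
      rw [hnil h₁, hnil h₂]
    exact le_trans (Nat.sInf_le h0) (Nat.zero_le _)
  · set Q : List (O × A) → O → A → ℝ := fun h => fun o a => Qfull T reward trans πs γ h o a
      with hQdef
    set πg := greedy Q with hπg
    have hQT : CtxDep T Q := by
      intro h₁ h₂ hlen hdrop
      rcases lt_or_ge h₁.length T with hl | hl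
      · have e1 : h₁.length - T = 0 := by omega
        have e2 : h₂.length - T = 0 := by omega
        rw [e1, e2, List.drop_zero, List.drop_zero] at hdrop
        rw [hdrop]
      · funext o a
        show Qfull T reward trans πs γ h₁ o a = Qfull T reward trans πs γ h₂ o a
        unfold Qfull
        have e1 : T - h₁.length = 0 := by omega
        have e2 : T - h₂.length = 0 := by omega
        rw [e1, e2]
        simp [nstep]
    have hgood : OptimalPolicy T reward trans γ πg := by
      refine ⟨greedy_policy Q, ?_⟩
      intro π' hπ' h o
      refine (hopt.2 π' hπ' h o).trans ?_
      have key := nstep_le_greedy T γ reward trans πs hγ0 htrans hopt.1 (T - h.length) h rfl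
      show ∑ a, πs h o a * Qfull T reward trans πs γ h o a ≤
        ∑ a, πg h o a * Qfull T reward trans πg γ h o a
      rw [hπg, sum_greedy_mul]
      have step1 : ∑ a, πs h o a * Qfull T reward trans πs γ h o a ≤
          Qfull T reward trans πs γ h o (argmaxF (Q h o)) := by
        apply sum_weight_le _ _ (hopt.1.1 h o) (hopt.1.2 h o)
        intro a
        exact argmaxF_spec (Q h o) a
      exact step1.trans (key o _)
    have hmem : memLen πg ≤ memLen Q := by
      have hn : sInf {k | CtxDep k Q} ∈ {k | CtxDep k Q} := Nat.sInf_mem ⟨T, hQT⟩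
      have hg : CtxDep (sInf {k | CtxDep k Q}) πg := by
        intro h₁ h₂ hlen hdrop
        have hQeq : Q h₁ = Q h₂ := hn h₁ h₂ hlen hdrop
        rw [hπg]
        funext o a
        unfold greedy
        rw [hQeq]
      exact Nat.sInf_le hg
    exact (hmin πg hgood).trans hmem
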